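/- Let A be a complete discrete valuation ring with maximal ideal 𝔭 and finite residue field, and let n be a positive integer. Let H_n be the ideal of A generated by all elements of the form x^n − 1 with x a unit of A. Then an ideal I of A is n-congruing (i.e., for every a ∈ A there exists N ∈ ℕ with a^N·(a^n − 1) ∈ I) if and only if I contains H_n. -/

import Mathlib

section aux

variable {A : Type} [CommRing A] [IsDomain A]

lemma pow_inj_aux (π : A) (hπ0 : π ≠ 0) (hπu : ¬ IsUnit π) :
    Function.Injective (fun k : ℕ => π ^ k) := by
  intro i j hij
  simp only at hij
  by_contra hne
  wlog h : i < j generalizing i j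
  · exact this hij.symm (Ne.symm hne) (by omega)
  have : π ^ i * 1 = π ^ i * π ^ (j - i) := by
    rw [mul_one, ← pow_add]
    rw [hij]; congr 1; omega
  have h1 : (1 : A) = π ^ (j - i) := mul_left_cancel₀ (pow_ne_zero _ hπ0) this
  have : IsUnit π := by
    apply IsUnit.of_mul_eq_one (a := π) (π ^ (j - i - 1))
    rw [← pow_succ']
    rw [h1]
    congr 1
    omega
  exact hπu this

/-- There is a unit whose `n`-th power is not `1`. -/
lemma exists_unit_pow_ne_one (π : A) (hπ0 : π ≠ 0) (hπu : ¬ IsUnit π)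
    (hmax : ∀ a : A, a ∉ Ideal.span {π} → IsUnit a) (n : ℕ) (hn : 0 < n) :
    ∃ x : Aˣ, (x : A) ^ n ≠ 1 := by
  by_contra hc
  push_neg at hc
  -- every element 1 + π^(k+1) is a unit
  have hunit : ∀ k : ℕ, IsUnit (1 + π ^ (k + 1)) := by
    intro k
    apply hmax
    intro hmem
    apply hπu
    have hπk : π ^ (k + 1) ∈ Ideal.span {π} :=
      Ideal.mem_span_singleton.mpr (dvd_pow_self π (by omega))
    have h1 : (1 : A) ∈ Ideal.span {π} := by
      have := Ideal.sub_mem _ hmem hπk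
      simpa using this
    obtain ⟨c, hc'⟩ := Ideal.mem_span_singleton'.mp h1
    exact IsUnit.of_mul_eq_one (a := π) c (by rw [mul_comm]; exact hc')
  -- the map k ↦ 1 + π^(k+1) is injective
  have hinj : Function.Injective (fun k : ℕ => 1 + π ^ (k + 1)) := by
    intro i j hij
    simp only [add_right_inj] at hij
    have := pow_inj_aux π hπ0 hπu hij
    omega
  -- all these are roots of X^n - 1
  have hroot : ∀ k : ℕ, (1 + π ^ (k + 1)) ^ n = 1 := by
    intro k
    have := hc (hunit k).unit
    rwa [IsUnit.unit_spec] at this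
  have hfin : Set.Finite {x : A | ((Polynomial.X : Polynomial A) ^ n - Polynomial.C 1).IsRoot x} :=
    Polynomial.finite_setOf_isRoot (Polynomial.X_pow_sub_C_ne_zero hn 1)
  have hsub : Set.range (fun k : ℕ => 1 + π ^ (k + 1)) ⊆
      {x : A | ((Polynomial.X : Polynomial A) ^ n - Polynomial.C 1).IsRoot x} := by
    rintro _ ⟨k, rfl⟩
    simp [Polynomial.IsRoot, hroot k]
  exact (Set.infinite_range_of_injective hinj) (hfin.subset hsub)

end aux

/-- Let `A` be a complete discrete valuation ring (here: a domain with a nonzero non-unit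
`π` generating the maximal ideal, complete in the `(π)`-adic topology) with finite residue
field, and let `n` be a positive integer. Let `H_n` be the ideal generated by all `x^n − 1`
with `x` a unit. Then an ideal `I` is `n`-congruing (for every `a` there is `N` with
`a^N·(a^n − 1) ∈ I`) if and only if `H_n ≤ I`. -/
theorem stmt_7 {A : Type} [CommRing A] [IsDomain A] (π : A) (hπ0 : π ≠ 0)
    (hπu : ¬ IsUnit π) (hmax : ∀ a : A, a ∉ Ideal.span {π} → IsUnit a)
    [IsAdicComplete (Ideal.span {π}) A] [Finite (A ⧸ Ideal.span {π})]
    (n : ℕ) (hn : 0 < n) (I : Ideal A) :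
    (∀ a : A, ∃ N : ℕ, a ^ N * (a ^ n - 1) ∈ I) ↔
      Ideal.span {y : A | ∃ x : Aˣ, y = (x : A) ^ n - 1} ≤ I := by
  classical
  constructor
  · intro h
    rw [Ideal.span_le]
    rintro y ⟨x, rfl⟩
    obtain ⟨N, hN⟩ := h x
    have key : ((x⁻¹ : Aˣ) : A) ^ N * ((x : A) ^ N * ((x : A) ^ n - 1))
        = (x : A) ^ n - 1 := by
      rw [← mul_assoc, ← mul_pow, Units.inv_mul, one_pow, one_mul]
    have := I.mul_mem_left (((x⁻¹ : Aˣ) : A) ^ N) hN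
    rwa [key] at this
  · intro hH a
    by_cases ha : IsUnit a
    · refine ⟨0, ?_⟩
      rw [pow_zero, one_mul]
      exact hH (Ideal.subset_span ⟨ha.unit, by rw [ha.unit_spec]⟩)
    · -- a is not a unit, so a ∈ (π)
      have haπ : a ∈ Ideal.span {π} := by
        by_contra hmem; exact ha (hmax a hmem)
      obtain ⟨x, hx⟩ := exists_unit_pow_ne_one π hπ0 hπu hmax n hn
      set h : A := (x : A) ^ n - 1 with hdef
      have hne : h ≠ 0 := sub_ne_zero.mpr hx
      have hHn : h ∈ Ideal.span {y : A | ∃ x : Aˣ, y = (x : A) ^ n - 1} :=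
        Ideal.subset_span ⟨x, rfl⟩
      -- find minimal k with h ∉ (π)^(k+1)
      have hex : ∃ m : ℕ, h ∉ (Ideal.span {π}) ^ m := by
        by_contra hall
        push_neg at hall
        apply hne
        apply IsHausdorff.haus (IsAdicComplete.toIsHausdorff (I := Ideal.span {π})) h
        intro m
        rw [SModEq.zero, smul_eq_mul, Ideal.mul_top]
        exact hall m
      set k' := Nat.find hex with hk'
      have hk'pos : 0 < k' := by
        rcases Nat.eq_zero_or_pos k' with h0 | h
        · exfalso
          have := Nat.find_spec hex
          rw [← hk', h0, pow_zero, Ideal.one_eq_top] at this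
          exact this Submodule.mem_top
        · exact h
      set k := k' - 1 with hkdef
      have hmemk : h ∈ (Ideal.span {π}) ^ k := by
        by_contra hcon
        have := Nat.find_min hex (m := k) (by omega)
        exact this hcon
      have hnmemk : h ∉ (Ideal.span {π}) ^ (k + 1) := by
        have : k + 1 = k' := by omega
        rw [this]
        exact Nat.find_spec hex
      rw [Ideal.span_singleton_pow] at hmemk
      obtain ⟨b, hb⟩ := Ideal.mem_span_singleton'.mp hmemk
      have hbu : IsUnit b := by
        apply hmax
        intro hbmem
        apply hnmemk
        obtain ⟨c, hc⟩ := Ideal.mem_span_singleton'.mp hbmem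
        rw [Ideal.span_singleton_pow, Ideal.mem_span_singleton']
        exact ⟨c, by rw [← hb, ← hc, pow_succ]; ring⟩
      -- π ^ k ∈ H_n
      obtain ⟨u, hu⟩ := hbu
      have hπk : π ^ k ∈ Ideal.span {y : A | ∃ x : Aˣ, y = (x : A) ^ n - 1} := by
        have : π ^ k = ((u⁻¹ : Aˣ) : A) * h := by
          rw [← hb, ← hu, ← mul_assoc, Units.inv_mul, one_mul]
        rw [this]
        exact Ideal.mul_mem_left _ _ hHn
      refine ⟨k, ?_⟩
      obtain ⟨c, hc⟩ := Ideal.mem_span_singleton'.mp haπ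
      have hak : a ^ k ∈ I := by
        have : a ^ k = c ^ k * π ^ k := by rw [← hc, mul_pow]
        rw [this]
        exact I.mul_mem_left _ (hH hπk)
      exact I.mul_mem_right _ hak
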